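/- Let p be a prime, Γ a procyclic pro-p group topologically generated by γ, and identify Z_p[[Γ]] ≅ Λ = Z_p[[T]] via γ ↔ 1+T. Let M be a free pro-p group on d generators equipped with a continuous Γ-action, and set M^{(1)} = M, M^{(n)} = [M^{(n-1)}, F] where F is a pro-p group containing M as a normal subgroup with F generated by M together with elements mapping onto Γ and an involution acting on M/M_2 by inversion. Then for all n ≥ 1, the image M^{(n)}M_2/M_2 equals (p,T)^{n-1}·(M/M_2) as submodules of the free Λ-module M/M_2 ≅ Λ^d. -/

import Mathlib

/-!  STATEMENT 15 (formula (approx:M) of the paper, `p = 2`): Let `Λ = ℤ₂[[T]]`,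
`Γ = ⟨γ⟩`.  Let `F` be a group with a normal subgroup `M` whose abelianization
`V = M/M₂` is a free `Λ`-module of rank `d` (encoded by a map `φ : F → V` which is an
additive surjection on `M` with kernel `M₂ = [M,M]`), where `F` is generated by `M`
together with an element `w` acting on `V` by `1 + T` (the `γ`-action) and an
involution `x` acting on `V` by inversion.  Setting `M⁽¹⁾ = M`,
`M⁽ⁿ⁾ = [M⁽ⁿ⁻¹⁾, F]`, the image of `M⁽ⁿ⁾` in `V` is `(2,T)^{n-1}·V`
(below `Mseq M n = M⁽ⁿ⁺¹⁾`). -/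

/-- `Mseq M 0 = M`, `Mseq M (n+1) = [Mseq M n, F]`. -/
def Mseq {F : Type*} [Group F] (M : Subgroup F) : ℕ → Subgroup F
  | 0 => M
  | n + 1 => ⁅Mseq M n, (⊤ : Subgroup F)⁆

open scoped commutatorElement

theorem stmt_15 {F : Type*} [Group F] (M : Subgroup F) (hM : M.Normal)
    {V : Type*} [AddCommGroup V] [Module (PowerSeries ℤ_[2]) V]
    (d : ℕ) (bV : Module.Basis (Fin d) (PowerSeries ℤ_[2]) V) (φ : F → V)
    (hadd : ∀ a ∈ M, ∀ b ∈ M, φ (a * b) = φ a + φ b)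
    (hsurj : ∀ v : V, ∃ a ∈ M, φ a = v)
    (hker : ∀ a ∈ M, (φ a = 0 ↔ a ∈ ⁅M, M⁆))
    (w x : F)
    (hw : ∀ a ∈ M,
      φ (w * a * w⁻¹) = (1 + PowerSeries.X : PowerSeries ℤ_[2]) • φ a)
    (hx : ∀ a ∈ M, φ (x * a * x⁻¹) = - φ a) (hx2 : x * x ∈ M)
    (hgen : Subgroup.closure ((M : Set F) ∪ {w, x}) = ⊤) :
    ∀ n : ℕ,
      Submodule.span (PowerSeries ℤ_[2]) (φ '' (Mseq M n : Set F)) =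
        (Ideal.span {(2 : PowerSeries ℤ_[2]), PowerSeries.X}) ^ n •
          (⊤ : Submodule (PowerSeries ℤ_[2]) V) := by
  set Λ : Type := PowerSeries ℤ_[2] with hΛ
  set I : Ideal Λ := Ideal.span {(2 : Λ), PowerSeries.X} with hIdef
  -- basic facts about φ
  have hφ1 : φ 1 = 0 := by
    have h := hadd 1 M.one_mem 1 M.one_mem
    rw [mul_one] at h
    exact (right_eq_add.mp h)
  have hφinv : ∀ a ∈ M, φ a⁻¹ = - φ a := by
    intro a ha
    have h := hadd a ha a⁻¹ (M.inv_mem ha)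
    rw [mul_inv_cancel, hφ1] at h
    have h2 := h.symm
    rw [add_comm, add_eq_zero_iff_eq_neg] at h2
    exact h2
  -- 1 + X is a unit
  have hu : IsUnit (1 + PowerSeries.X : Λ) := by
    rw [PowerSeries.isUnit_iff_constantCoeff]
    simp
  obtain ⟨u, hu_eq⟩ := hu
  have hXI : (PowerSeries.X : Λ) ∈ I := Ideal.subset_span (by simp)
  have h2I : (2 : Λ) ∈ I := Ideal.subset_span (by simp)
  -- conjugation acts on V by a scalar c with 1 - c ∈ (2, X) and c a unit
  have hconj : ∀ g : F, ∃ c c' : Λ, c * c' = 1 ∧ (1 - c) ∈ I ∧ (1 - c') ∈ I ∧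
      ∀ a ∈ M, φ (g * a * g⁻¹) = c • φ a := by
    intro g
    have hg : g ∈ Subgroup.closure ((M : Set F) ∪ {w, x}) := by rw [hgen]; trivial
    induction hg using Subgroup.closure_induction with
    | mem s hs =>
      rcases hs with hs | hs
      · -- s ∈ M : acts trivially
        refine ⟨1, 1, one_mul 1, by simp, by simp, ?_⟩
        intro a ha
        have h1 : φ (s * a) = φ s + φ a := hadd s hs a ha
        have h2 : φ (s * a * s⁻¹) = φ (s * a) + φ s⁻¹ :=
          hadd (s * a) (M.mul_mem hs ha) s⁻¹ (M.inv_mem hs)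
        rw [h2, h1, hφinv s hs, one_smul]
        abel
      · rcases hs with hs | hs
        · -- s = w
          subst hs
          refine ⟨(1 + PowerSeries.X : Λ), (↑u⁻¹ : Λ), ?_, ?_, ?_, hw⟩
          · rw [← hu_eq]; exact u.mul_inv
          · have : (1 : Λ) - (1 + PowerSeries.X) = -PowerSeries.X := by ring
            rw [this]; exact I.neg_mem hXI
          · have : (1 : Λ) - (↑u⁻¹ : Λ) = (↑u⁻¹ : Λ) * PowerSeries.X := by
              have := u.inv_mul
              calc (1 : Λ) - (↑u⁻¹ : Λ) = (↑u⁻¹ : Λ) * (↑u : Λ) - (↑u⁻¹ : Λ) * 1 := by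
                    rw [u.inv_mul, mul_one]
                _ = (↑u⁻¹ : Λ) * ((↑u : Λ) - 1) := by ring
                _ = (↑u⁻¹ : Λ) * PowerSeries.X := by rw [hu_eq, add_sub_cancel_left]
            rw [this]; exact I.mul_mem_left _ hXI
        · -- s = x
          simp only [Set.mem_singleton_iff] at hs
          subst hs
          refine ⟨-1, -1, by ring, ?_, ?_, ?_⟩
          · have : (1 : Λ) - (-1) = 2 := by ring
            rw [this]; exact h2I
          · have : (1 : Λ) - (-1) = 2 := by ring
            rw [this]; exact h2I
          · intro a ha
            rw [hx a ha, neg_smul, one_smul]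
    | one =>
      refine ⟨1, 1, one_mul 1, by simp, by simp, ?_⟩
      intro a ha
      simp [one_smul]
    | mul g h hgc hhc ihg ihh =>
      obtain ⟨c₁, c₁', hcc₁, hc₁, hc₁', hgact⟩ := ihg
      obtain ⟨c₂, c₂', hcc₂, hc₂, hc₂', hhact⟩ := ihh
      refine ⟨c₁ * c₂, c₂' * c₁', by
        calc c₁ * c₂ * (c₂' * c₁') = (c₁ * c₁') * (c₂ * c₂') := by ring
          _ = 1 := by rw [hcc₁, hcc₂, mul_one], ?_, ?_, ?_⟩
      · have : 1 - c₁ * c₂ = (1 - c₁) + c₁ * (1 - c₂) := by ring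
        rw [this]; exact I.add_mem hc₁ (I.mul_mem_left _ hc₂)
      · have : 1 - c₂' * c₁' = (1 - c₂') + c₂' * (1 - c₁') := by ring
        rw [this]; exact I.add_mem hc₂' (I.mul_mem_left _ hc₁')
      · intro a ha
        have hb : h * a * h⁻¹ ∈ M := hM.conj_mem a ha h
        have : g * h * a * (g * h)⁻¹ = g * (h * a * h⁻¹) * g⁻¹ := by
          rw [mul_inv_rev]; group
        rw [this, hgact _ hb, hhact a ha, smul_smul]
    | inv g hgc ih =>
      obtain ⟨c, c', hcc, hc, hc', hact⟩ := ih
      refine ⟨c', c, by rw [mul_comm]; exact hcc, hc', hc, ?_⟩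
      intro a ha
      have hb : g⁻¹ * a * g⁻¹⁻¹ ∈ M := hM.conj_mem a ha g⁻¹
      have h1 : φ (g * (g⁻¹ * a * g⁻¹⁻¹) * g⁻¹) = c • φ (g⁻¹ * a * g⁻¹⁻¹) := hact _ hb
      have h2 : g * (g⁻¹ * a * g⁻¹⁻¹) * g⁻¹ = a := by group
      rw [h2] at h1
      rw [h1, smul_smul, mul_comm c' c, hcc, one_smul]
  -- commutator formula
  have hcomm : ∀ m ∈ M, ∀ g : F, ∃ c : Λ, (1 - c) ∈ I ∧ φ ⁅m, g⁆ = (1 - c) • φ m := by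
    intro m hm g
    obtain ⟨c, c', hcc, hc, hc', hact⟩ := hconj g
    refine ⟨c, hc, ?_⟩
    have hinvmem : g * m⁻¹ * g⁻¹ ∈ M := hM.conj_mem m⁻¹ (M.inv_mem hm) g
    have h1 : ⁅m, g⁆ = m * (g * m⁻¹ * g⁻¹) := by
      rw [commutatorElement_def]; group
    rw [h1, hadd m hm _ hinvmem, hact m⁻¹ (M.inv_mem hm), hφinv m hm, sub_smul, one_smul,
      smul_neg]
    abel
  -- each Mseq is contained in M
  have hNle : ∀ n : ℕ, Mseq M n ≤ M := by
    intro n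
    induction n with
    | zero => exact le_rfl
    | succ n ih =>
      show ⁅Mseq M n, (⊤ : Subgroup F)⁆ ≤ M
      rw [Subgroup.commutator_le]
      intro a ha g _
      have ham : a ∈ M := ih ha
      have : ⁅a, g⁆ = a * (g * a⁻¹ * g⁻¹) := by rw [commutatorElement_def]; group
      rw [this]
      exact M.mul_mem ham (hM.conj_mem a⁻¹ (M.inv_mem ham) g)
  -- the key step
  have hstep : ∀ n : ℕ,
      Submodule.span Λ (φ '' (Mseq M (n + 1) : Set F)) =
        I • Submodule.span Λ (φ '' (Mseq M n : Set F)) := by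
    intro n
    set N := Mseq M n with hN
    set S : Submodule Λ V := I • Submodule.span Λ (φ '' (N : Set F)) with hS
    -- the subgroup of elements of M mapping into S
    set A : Subgroup F :=
      { carrier := {a : F | a ∈ M ∧ φ a ∈ S}
        one_mem' := ⟨M.one_mem, by rw [hφ1]; exact S.zero_mem⟩
        mul_mem' := by
          rintro a b ⟨ha, hfa⟩ ⟨hb, hfb⟩
          exact ⟨M.mul_mem ha hb, by rw [hadd a ha b hb]; exact S.add_mem hfa hfb⟩
        inv_mem' := by
          rintro a ⟨ha, hfa⟩
          exact ⟨M.inv_mem ha, by rw [hφinv a ha]; exact S.neg_mem hfa⟩ } with hA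
    have hsub : Mseq M (n + 1) ≤ A := by
      show ⁅N, (⊤ : Subgroup F)⁆ ≤ A
      rw [Subgroup.commutator_le]
      intro m hm g _
      have hmM : m ∈ M := hNle n hm
      obtain ⟨c, hc, hval⟩ := hcomm m hmM g
      refine ⟨(hNle (n + 1)) (Subgroup.commutator_mem_commutator hm (Subgroup.mem_top g)), ?_⟩
      rw [hval]
      exact Submodule.smul_mem_smul hc (Submodule.subset_span ⟨m, hm, rfl⟩)
    apply le_antisymm
    · rw [Submodule.span_le]
      rintro v ⟨a, ha, rfl⟩
      exact (hsub ha).2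
    · rw [Submodule.smul_le]
      intro r hr v hv
      -- reduce to v = φ m, m ∈ N
      have key : ∀ m ∈ N, ∀ s ∈ I,
          s • φ m ∈ Submodule.span Λ (φ '' ((Mseq M (n + 1)) : Set F)) := by
        intro m hm s hs
        have hmM : m ∈ M := hNle n hm
        set T := Submodule.span Λ (φ '' ((Mseq M (n + 1)) : Set F)) with hT
        have h2v : (2 : Λ) • φ m ∈ T := by
          have hmem : ⁅m, x⁆ ∈ Mseq M (n + 1) :=
            Subgroup.commutator_mem_commutator hm (Subgroup.mem_top x)
          have hval : φ ⁅m, x⁆ = (2 : Λ) • φ m := by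
            have hinvmem : x * m⁻¹ * x⁻¹ ∈ M := hM.conj_mem m⁻¹ (M.inv_mem hmM) x
            have h1 : ⁅m, x⁆ = m * (x * m⁻¹ * x⁻¹) := by rw [commutatorElement_def]; group
            rw [h1, hadd m hmM _ hinvmem, hx m⁻¹ (M.inv_mem hmM), hφinv m hmM, two_smul]
            abel
          rw [← hval]
          exact Submodule.subset_span ⟨_, hmem, rfl⟩
        have hXv : (PowerSeries.X : Λ) • φ m ∈ T := by
          have hmem : ⁅m, w⁆ ∈ Mseq M (n + 1) :=
            Subgroup.commutator_mem_commutator hm (Subgroup.mem_top w)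
          have hval : φ ⁅m, w⁆ = -((PowerSeries.X : Λ) • φ m) := by
            have hinvmem : w * m⁻¹ * w⁻¹ ∈ M := hM.conj_mem m⁻¹ (M.inv_mem hmM) w
            have h1 : ⁅m, w⁆ = m * (w * m⁻¹ * w⁻¹) := by rw [commutatorElement_def]; group
            rw [h1, hadd m hmM _ hinvmem, hw m⁻¹ (M.inv_mem hmM), hφinv m hmM]
            have : ((1 + PowerSeries.X : Λ)) • (-φ m)
                = -φ m - (PowerSeries.X : Λ) • φ m := by
              rw [add_smul, one_smul, smul_neg]; abel
            rw [this]; abel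
          have : (PowerSeries.X : Λ) • φ m = -φ ⁅m, w⁆ := by rw [hval]; abel
          rw [this]
          exact T.neg_mem (Submodule.subset_span ⟨_, hmem, rfl⟩)
        rw [hIdef] at hs
        rw [Ideal.mem_span_pair] at hs
        obtain ⟨a, b, hab⟩ := hs
        have : s • φ m = a • ((2 : Λ) • φ m) + b • ((PowerSeries.X : Λ) • φ m) := by
          rw [smul_smul, smul_smul, ← add_smul, hab]
        rw [this]
        exact T.add_mem (T.smul_mem a h2v) (T.smul_mem b hXv)
      -- span induction over v
      induction hv using Submodule.span_induction with
      | mem v hvmem =>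
        obtain ⟨m, hm, rfl⟩ := hvmem
        exact key m hm r hr
      | zero => rw [smul_zero]; exact Submodule.zero_mem _
      | add v₁ v₂ h₁ h₂ ih₁ ih₂ =>
        rw [smul_add]; exact Submodule.add_mem _ ih₁ ih₂
      | smul a v₁ h₁ ih =>
        rw [smul_comm]; exact Submodule.smul_mem _ a ih
  -- conclude by induction
  intro n
  induction n with
  | zero =>
    have : Submodule.span Λ (φ '' ((Mseq M 0 : Subgroup F) : Set F)) = ⊤ := by
      rw [eq_top_iff]
      intro v _
      obtain ⟨a, ha, rfl⟩ := hsurj v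
      exact Submodule.subset_span ⟨a, ha, rfl⟩
    rw [this, pow_zero, Ideal.one_eq_top, Submodule.top_smul]
  | succ n ih =>
    rw [hstep n, ih, pow_succ, mul_comm]
    exact (Submodule.smul_assoc I (I ^ n) ⊤).symm
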